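/- arXiv:1107.4965 — 2 statements merged into one kernel-verified Lean document; each statement's English description precedes it below -/
import Mathlib

section
/- Let W be a channel with input alphabet X = (Fin r → ZMod 2) (q = 2^r inputs). Then the symmetric capacity decomposes as I(W) = Σ_{m=1}^{r} c_m · Σ_{x₁∈X} Σ' J(P_{x₁,x}, Q_{x₁,x}), where c_m = (1/2^r)·∏_{j=1}^{m} 1/(2^r − 2^{j−1}); the inner sum Σ' is over all tuples x = (x₂,…,x_{m+1}) ∈ X^m that are linearly independent over ZMod 2 (equivalently: x₂ ≠ 0 and, for 3 ≤ j ≤ m+1, x_j is not equal to any {0,1}-combination of x₂,…,x_{j−1}); P_{x₁,x}(y) = 2^{−(m−1)}·Σ_{a∈(ZMod 2)^{m−1}} W( x₁ + Σ_{i=1}^{m−1} a_i·x_{i+1} ) y and Q_{x₁,x}(y) = 2^{−(m−1)}·Σ_{a∈(ZMod 2)^{m−1}} W( x₁ + x_{m+1} + Σ_{i=1}^{m−1} a_i·x_{i+1} ) y (sums of inputs taken coordinatewise in ZMod 2). -/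
open Finset

/-- The symmetric capacity of a channel with uniform input (with `0 log 0 = 0`). -/
noncomputable def capty {X Y : Type*} [Fintype X] [Fintype Y] (W : X → Y → ℝ) : ℝ :=
  ∑ x, ∑ y, (1 / (Fintype.card X : ℝ)) * W x y *
    Real.logb 2 (W x y / ∑ x', (1 / (Fintype.card X : ℝ)) * W x' y)

/-- The symmetric capacity of the binary-input channel with output rows `p`, `p'`. -/
noncomputable def Jcap {Y : Type*} [Fintype Y] (p p' : Y → ℝ) : ℝ :=
  ∑ y, ((1 / 2 : ℝ) * p y * Real.logb 2 (p y / ((1 / 2 : ℝ) * (p y + p' y))) +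
        (1 / 2 : ℝ) * p' y * Real.logb 2 (p' y / ((1 / 2 : ℝ) * (p y + p' y))))

/-- `P_{x₁,x}(y) = 2^{-(m-1)} ∑_{a ∈ (ZMod 2)^{m-1}} W(x₁ + ∑ aᵢ x_{i+1}) y`, where the
tuple `(x₂, …, x_{m+1})` of length `m = m'+1` is given by `t : Fin (m'+1) → X`. -/
noncomputable def Pmix {r : ℕ} {Y : Type*} [Fintype Y] (W : (Fin r → ZMod 2) → Y → ℝ)
    (m : ℕ) (x1 : Fin r → ZMod 2) (t : Fin (m + 1) → Fin r → ZMod 2) : Y → ℝ :=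
  fun y => (1 / 2 ^ m : ℝ) *
    ∑ a : Fin m → ZMod 2, W (x1 + ∑ i, a i • t i.castSucc) y

/-- `Q_{x₁,x}(y) = 2^{-(m-1)} ∑_{a ∈ (ZMod 2)^{m-1}} W(x₁ + x_{m+1} + ∑ aᵢ x_{i+1}) y`. -/
noncomputable def Qmix {r : ℕ} {Y : Type*} [Fintype Y] (W : (Fin r → ZMod 2) → Y → ℝ)
    (m : ℕ) (x1 : Fin r → ZMod 2) (t : Fin (m + 1) → Fin r → ZMod 2) : Y → ℝ :=
  fun y => (1 / 2 ^ m : ℝ) *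
    ∑ a : Fin m → ZMod 2, W (x1 + t (Fin.last m) + ∑ i, a i • t i.castSucc) y

/-! ### Auxiliary development -/

open scoped Classical

namespace CapAux

lemma zmod_sum {M : Type*} [AddCommMonoid M] (f : ZMod 2 → M) :
    ∑ c : ZMod 2, f c = f 0 + f 1 := by
  have h : (Finset.univ : Finset (ZMod 2)) = {0, 1} := by decide
  rw [h, Finset.sum_insert (by decide), Finset.sum_singleton]

/-- The `snoc` equivalence. -/
def snocEquiv (α : Type*) (m : ℕ) : ((Fin m → α) × α) ≃ (Fin (m + 1) → α) where
  toFun p := Fin.snoc p.1 p.2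
  invFun t := (fun i => t i.castSucc, t (Fin.last m))
  left_inv p := by
    ext
    · simp
    · simp
  right_inv t := Fin.snoc_init_self t

@[simp] lemma snocEquiv_apply {α : Type*} {m : ℕ} (b : Fin m → α) (c : α) :
    snocEquiv α m (b, c) = Fin.snoc b c := rfl

lemma logb_helper (a b : ℝ) (ha : 0 ≤ a) (hb : b ≠ 0) :
    a * Real.logb 2 (a / b) = a * Real.logb 2 a - a * Real.logb 2 b := by
  rcases eq_or_lt_of_le ha with h | h
  · simp [← h]
  · rw [Real.logb_div (ne_of_gt h) hb]; ring

lemma jpoint (p q g : ℝ) (hp : 0 ≤ p) (hq : 0 ≤ q) (hg : g = 0 → p = 0 ∧ q = 0) :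
    ((1 / 2 : ℝ) * (p + q)) * Real.logb 2 (((1 / 2 : ℝ) * (p + q)) / g)
      = ((1 / 2 : ℝ) * p * Real.logb 2 (p / g) + (1 / 2 : ℝ) * q * Real.logb 2 (q / g))
        - ((1 / 2 : ℝ) * p * Real.logb 2 (p / ((1 / 2 : ℝ) * (p + q))) +
           (1 / 2 : ℝ) * q * Real.logb 2 (q / ((1 / 2 : ℝ) * (p + q)))) := by
  rcases eq_or_ne g 0 with hg0 | hg0
  · obtain ⟨hp0, hq0⟩ := hg hg0
    simp [hp0, hq0, hg0]
  · rcases eq_or_lt_of_le (add_nonneg hp hq) with h0 | h0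
    · have hp0 : p = 0 := by linarith
      have hq0 : q = 0 := by linarith
      simp [hp0, hq0]
    · have hm : ((1 / 2 : ℝ) * (p + q)) ≠ 0 := ne_of_gt (by linarith)
      rw [show (1 / 2 : ℝ) * p * Real.logb 2 (p / g)
            = (1 / 2 : ℝ) * (p * Real.logb 2 p - p * Real.logb 2 g) by
          rw [mul_assoc, logb_helper p g hp hg0],
        show (1 / 2 : ℝ) * q * Real.logb 2 (q / g)
            = (1 / 2 : ℝ) * (q * Real.logb 2 q - q * Real.logb 2 g) by
          rw [mul_assoc, logb_helper q g hq hg0],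
        show (1 / 2 : ℝ) * p * Real.logb 2 (p / ((1 / 2 : ℝ) * (p + q)))
            = (1 / 2 : ℝ) * (p * Real.logb 2 p - p * Real.logb 2 ((1 / 2 : ℝ) * (p + q))) by
          rw [mul_assoc, logb_helper p _ hp hm],
        show (1 / 2 : ℝ) * q * Real.logb 2 (q / ((1 / 2 : ℝ) * (p + q)))
            = (1 / 2 : ℝ) * (q * Real.logb 2 q - q * Real.logb 2 ((1 / 2 : ℝ) * (p + q))) by
          rw [mul_assoc, logb_helper q _ hq hm],
        logb_helper _ g (by linarith) hg0]
      ring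

section Channel

variable {r : ℕ} {Y : Type*} [Fintype Y]

/-- The output distribution under uniform input. -/
noncomputable def Gmix (W : (Fin r → ZMod 2) → Y → ℝ) : Y → ℝ :=
  fun y => ∑ x', (1 / (Fintype.card (Fin r → ZMod 2) : ℝ)) * W x' y

/-- The average of the rows of `W` over the coset `x1 + span s` (counted via `{0,1}`
combinations). -/
noncomputable def Amix (W : (Fin r → ZMod 2) → Y → ℝ) (m : ℕ) (x1 : Fin r → ZMod 2)
    (s : Fin m → Fin r → ZMod 2) : Y → ℝ :=
  fun y => (1 / 2 ^ m : ℝ) * ∑ a : Fin m → ZMod 2, W (x1 + ∑ i, a i • s i) y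

/-- The main telescoping quantity. -/
noncomputable def Tm (W : (Fin r → ZMod 2) → Y → ℝ) (m : ℕ) : ℝ :=
  ∑ x1, ∑ s : Fin m → Fin r → ZMod 2,
    if LinearIndependent (ZMod 2) s then
      ∑ y, Amix W m x1 s y * Real.logb 2 (Amix W m x1 s y / Gmix W y)
    else 0

lemma Pmix_eq (W : (Fin r → ZMod 2) → Y → ℝ) (m : ℕ) (x1 : Fin r → ZMod 2)
    (t : Fin (m + 1) → Fin r → ZMod 2) :
    Pmix W m x1 t = Amix W m x1 (fun i => t i.castSucc) := rfl

lemma Qmix_eq (W : (Fin r → ZMod 2) → Y → ℝ) (m : ℕ) (x1 : Fin r → ZMod 2)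
    (t : Fin (m + 1) → Fin r → ZMod 2) :
    Qmix W m x1 t = Pmix W m (x1 + t (Fin.last m)) t := rfl

lemma card_X : Fintype.card (Fin r → ZMod 2) = 2 ^ r := by
  rw [Fintype.card_fun, ZMod.card, Fintype.card_fin]

lemma Amix_succ (W : (Fin r → ZMod 2) → Y → ℝ) (m : ℕ) (x1 : Fin r → ZMod 2)
    (t : Fin (m + 1) → Fin r → ZMod 2) (y : Y) :
    Amix W (m + 1) x1 t y = (1 / 2 : ℝ) * (Pmix W m x1 t y + Qmix W m x1 t y) := by
  have hsum : ∑ a : Fin (m + 1) → ZMod 2, W (x1 + ∑ i, a i • t i) y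
      = (∑ b : Fin m → ZMod 2, W (x1 + ∑ i, b i • t i.castSucc) y)
        + ∑ b : Fin m → ZMod 2, W (x1 + t (Fin.last m) + ∑ i, b i • t i.castSucc) y := by
    rw [← Equiv.sum_comp (snocEquiv (ZMod 2) m) (fun a => W (x1 + ∑ i, a i • t i) y),
      Fintype.sum_prod_type, ← Finset.sum_add_distrib]
    apply Finset.sum_congr rfl
    intro b _
    simp only [snocEquiv_apply]
    rw [zmod_sum (fun c => W (x1 + ∑ i, (Fin.snoc b c : Fin (m + 1) → ZMod 2) i • t i) y)]
    congr 1
    · have h0 : ∑ i, (Fin.snoc b (0 : ZMod 2) : Fin (m + 1) → ZMod 2) i • t i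
          = ∑ i : Fin m, b i • t i.castSucc := by
        rw [Fin.sum_univ_castSucc]
        simp
      rw [h0]
    · have h1 : ∑ i, (Fin.snoc b (1 : ZMod 2) : Fin (m + 1) → ZMod 2) i • t i
          = (∑ i : Fin m, b i • t i.castSucc) + t (Fin.last m) := by
        rw [Fin.sum_univ_castSucc]
        simp
      rw [h1, show x1 + ((∑ i : Fin m, b i • t i.castSucc) + t (Fin.last m))
          = x1 + t (Fin.last m) + ∑ i : Fin m, b i • t i.castSucc by abel]
  show (1 / 2 ^ (m + 1) : ℝ) * _ = _
  rw [hsum]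
  unfold Pmix Qmix
  ring

lemma Gmix_nonneg (W : (Fin r → ZMod 2) → Y → ℝ) (hpos : ∀ x y, 0 ≤ W x y) (y : Y) :
    0 ≤ Gmix W y := by
  apply Finset.sum_nonneg
  intro x _
  have : (0 : ℝ) ≤ (1 / (Fintype.card (Fin r → ZMod 2) : ℝ)) := by positivity
  exact mul_nonneg this (hpos x y)

lemma Gmix_zero (W : (Fin r → ZMod 2) → Y → ℝ) (hpos : ∀ x y, 0 ≤ W x y) (y : Y)
    (h : Gmix W y = 0) : ∀ x, W x y = 0 := by
  intro x
  have hcard : (0 : ℝ) < (Fintype.card (Fin r → ZMod 2) : ℝ) := by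
    exact_mod_cast Fintype.card_pos
  have h' := (Finset.sum_eq_zero_iff_of_nonneg
    (fun x _ => mul_nonneg (by positivity) (hpos x y))).mp h x (Finset.mem_univ x)
  have h1 : (1 / (Fintype.card (Fin r → ZMod 2) : ℝ)) ≠ 0 := by positivity
  exact (mul_eq_zero.mp h').resolve_left h1

lemma Pmix_nonneg (W : (Fin r → ZMod 2) → Y → ℝ) (hpos : ∀ x y, 0 ≤ W x y) (m : ℕ)
    (x1 : Fin r → ZMod 2) (t : Fin (m + 1) → Fin r → ZMod 2) (y : Y) :
    0 ≤ Pmix W m x1 t y := by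
  unfold Pmix
  exact mul_nonneg (by positivity) (Finset.sum_nonneg fun a _ => hpos _ y)

lemma Qmix_nonneg (W : (Fin r → ZMod 2) → Y → ℝ) (hpos : ∀ x y, 0 ≤ W x y) (m : ℕ)
    (x1 : Fin r → ZMod 2) (t : Fin (m + 1) → Fin r → ZMod 2) (y : Y) :
    0 ≤ Qmix W m x1 t y := by
  unfold Qmix
  exact mul_nonneg (by positivity) (Finset.sum_nonneg fun a _ => hpos _ y)

lemma Pmix_zero_of_G (W : (Fin r → ZMod 2) → Y → ℝ) (hpos : ∀ x y, 0 ≤ W x y) (m : ℕ)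
    (x1 : Fin r → ZMod 2) (t : Fin (m + 1) → Fin r → ZMod 2) (y : Y)
    (h : Gmix W y = 0) : Pmix W m x1 t y = 0 := by
  unfold Pmix
  rw [Finset.sum_eq_zero fun a _ => Gmix_zero W hpos y h _, mul_zero]

lemma Qmix_zero_of_G (W : (Fin r → ZMod 2) → Y → ℝ) (hpos : ∀ x y, 0 ≤ W x y) (m : ℕ)
    (x1 : Fin r → ZMod 2) (t : Fin (m + 1) → Fin r → ZMod 2) (y : Y)
    (h : Gmix W y = 0) : Qmix W m x1 t y = 0 := by
  unfold Qmix
  rw [Finset.sum_eq_zero fun a _ => Gmix_zero W hpos y h _, mul_zero]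

lemma card_span (m : ℕ) (s : Fin m → Fin r → ZMod 2) (hs : LinearIndependent (ZMod 2) s) :
    Fintype.card {v : Fin r → ZMod 2 // v ∈ Submodule.span (ZMod 2) (Set.range s)} = 2 ^ m := by
  have h1 := finrank_span_eq_card hs
  have h2 := Module.card_eq_pow_finrank (K := ZMod 2)
    (V := Submodule.span (ZMod 2) (Set.range s))
  rw [ZMod.card, h1, Fintype.card_fin] at h2
  rw [← h2]

/-- Counting over `snoc` extensions. -/
lemma count_snoc (m : ℕ) (g : (Fin m → Fin r → ZMod 2) → ℝ) :
    ∑ t : Fin (m + 1) → Fin r → ZMod 2,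
        (if LinearIndependent (ZMod 2) t then g (fun i => t i.castSucc) else 0)
      = ((2 : ℝ) ^ r - 2 ^ m) *
        ∑ s : Fin m → Fin r → ZMod 2, (if LinearIndependent (ZMod 2) s then g s else 0) := by
  rw [← Equiv.sum_comp (snocEquiv (Fin r → ZMod 2) m)
    (fun t => if LinearIndependent (ZMod 2) t then g (fun i => t i.castSucc) else 0),
    Fintype.sum_prod_type, Finset.mul_sum]
  apply Finset.sum_congr rfl
  intro s _
  simp only [snocEquiv_apply]
  have harg : ∀ v : Fin r → ZMod 2,
      (fun i : Fin m => (Fin.snoc s v : Fin (m + 1) → Fin r → ZMod 2) i.castSucc) = s := by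
    intro v
    funext i
    simp
  by_cases hs : LinearIndependent (ZMod 2) s
  · have h2 : ∀ v : Fin r → ZMod 2,
        LinearIndependent (ZMod 2) (Fin.snoc s v : Fin (m + 1) → Fin r → ZMod 2)
          ↔ v ∉ Submodule.span (ZMod 2) (Set.range s) := by
      intro v
      rw [linearIndependent_fin_snoc]
      simp [hs]
    have hstep : ∀ v : Fin r → ZMod 2,
        (if LinearIndependent (ZMod 2) (Fin.snoc s v : Fin (m + 1) → Fin r → ZMod 2) then
          g (fun i => (Fin.snoc s v : Fin (m + 1) → Fin r → ZMod 2) i.castSucc) else 0)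
        = (if v ∉ Submodule.span (ZMod 2) (Set.range s) then g s else 0) := by
      intro v
      rw [harg v]
      exact if_congr (h2 v) rfl rfl
    erw [Finset.sum_congr rfl (fun v _ => hstep v)]
    rw [Finset.sum_ite, Finset.sum_const, Finset.sum_const_zero, add_zero, nsmul_eq_mul]
    have hcc : (Finset.univ.filter
        (fun v : Fin r → ZMod 2 => v ∉ Submodule.span (ZMod 2) (Set.range s))).card
        = 2 ^ r - 2 ^ m := by
      rw [← Fintype.card_subtype]
      rw [Fintype.card_subtype_compl, card_X, card_span m s hs]
    have hle : (2 : ℕ) ^ m ≤ 2 ^ r := by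
      have := Fintype.card_subtype_le
        (fun v : Fin r → ZMod 2 => v ∈ Submodule.span (ZMod 2) (Set.range s))
      rw [card_span m s hs, card_X] at this
      exact this
    rw [hcc, if_pos hs]
    push_cast [Nat.cast_sub hle]
    ring
  · have h3 : ∀ v : Fin r → ZMod 2,
        ¬ LinearIndependent (ZMod 2) (Fin.snoc s v : Fin (m + 1) → Fin r → ZMod 2) := by
      intro v hv
      exact hs (linearIndependent_fin_snoc.mp hv).1
    simp [h3, hs]

lemma T_zero (W : (Fin r → ZMod 2) → Y → ℝ) :
    Tm W 0 = ∑ x1, ∑ y, W x1 y * Real.logb 2 (W x1 y / Gmix W y) := by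
  unfold Tm
  apply Finset.sum_congr rfl
  intro x1 _
  have hconst : ∀ s : Fin 0 → Fin r → ZMod 2,
      (if LinearIndependent (ZMod 2) s then
        ∑ y, Amix W 0 x1 s y * Real.logb 2 (Amix W 0 x1 s y / Gmix W y) else 0)
      = ∑ y, W x1 y * Real.logb 2 (W x1 y / Gmix W y) := by
    intro s
    rw [if_pos linearIndependent_empty_type]
    have hA : ∀ y, Amix W 0 x1 s y = W x1 y := by
      intro y
      unfold Amix
      simp
    exact Finset.sum_congr rfl fun y _ => by rw [hA y]
  rw [Finset.sum_congr rfl (fun s _ => hconst s), Finset.sum_const]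
  simp

lemma capty_eq (W : (Fin r → ZMod 2) → Y → ℝ) :
    capty W = (1 / (2 : ℝ) ^ r) * Tm W 0 := by
  rw [T_zero, Finset.mul_sum]
  unfold capty
  apply Finset.sum_congr rfl
  intro x _
  rw [Finset.mul_sum]
  apply Finset.sum_congr rfl
  intro y _
  show (1 / (Fintype.card (Fin r → ZMod 2) : ℝ)) * W x y * Real.logb 2 (W x y / Gmix W y) = _
  rw [card_X]
  push_cast
  ring

lemma T_top (W : (Fin r → ZMod 2) → Y → ℝ) (hr : 1 ≤ r) (hpos : ∀ x y, 0 ≤ W x y) :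
    Tm W r = 0 := by
  have : Nonempty (Fin r) := ⟨⟨0, hr⟩⟩
  unfold Tm
  apply Finset.sum_eq_zero
  intro x1 _
  apply Finset.sum_eq_zero
  intro s _
  split_ifs with hs
  · apply Finset.sum_eq_zero
    intro y _
    have hcardr : Fintype.card (Fin r) = Module.finrank (ZMod 2) (Fin r → ZMod 2) := by
      simp
    set b := basisOfLinearIndependentOfCardEqFinrank hs hcardr with hb
    have hbs : ∀ i, b i = s i := by
      intro i
      rw [hb, coe_basisOfLinearIndependentOfCardEqFinrank]
    have hA : Amix W r x1 s y = Gmix W y := by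
      unfold Amix Gmix
      rw [card_X, Finset.mul_sum]
      push_cast
      apply Fintype.sum_bijective (fun a : Fin r → ZMod 2 => x1 + b.equivFun.symm a)
      · have h1 : Function.Bijective (fun a : Fin r → ZMod 2 => b.equivFun.symm a) :=
          b.equivFun.symm.bijective
        exact (Equiv.addLeft x1).bijective.comp h1
      · intro a
        have harg : ∑ i, a i • s i = b.equivFun.symm a := by
          rw [Module.Basis.equivFun_symm_apply]
          exact Finset.sum_congr rfl fun i _ => by rw [hbs]
        rw [harg]
    rw [hA]
    rcases eq_or_ne (Gmix W y) 0 with h | h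
    · rw [h, zero_mul]
    · rw [div_self h, Real.logb_one, mul_zero]
  · rfl

lemma T_rec (W : (Fin r → ZMod 2) → Y → ℝ) (hpos : ∀ x y, 0 ≤ W x y) (m : ℕ) :
    Tm W (m + 1) = ((2 : ℝ) ^ r - 2 ^ m) * Tm W m
      - ∑ x1 : Fin r → ZMod 2, ∑ t : Fin (m + 1) → Fin r → ZMod 2,
          (if LinearIndependent (ZMod 2) t then Jcap (Pmix W m x1 t) (Qmix W m x1 t) else 0) := by
  have step1 : Tm W (m + 1)
      = (∑ x1 : Fin r → ZMod 2, ∑ t : Fin (m + 1) → Fin r → ZMod 2,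
          (if LinearIndependent (ZMod 2) t then
            ∑ y, ((1 / 2 : ℝ) * Pmix W m x1 t y * Real.logb 2 (Pmix W m x1 t y / Gmix W y)
              + (1 / 2 : ℝ) * Qmix W m x1 t y * Real.logb 2 (Qmix W m x1 t y / Gmix W y))
          else 0))
        - ∑ x1 : Fin r → ZMod 2, ∑ t : Fin (m + 1) → Fin r → ZMod 2,
            (if LinearIndependent (ZMod 2) t then Jcap (Pmix W m x1 t) (Qmix W m x1 t) else 0) := by
    unfold Tm
    rw [← Finset.sum_sub_distrib]
    apply Finset.sum_congr rfl
    intro x1 _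
    rw [← Finset.sum_sub_distrib]
    apply Finset.sum_congr rfl
    intro t _
    by_cases ht : LinearIndependent (ZMod 2) t
    · rw [if_pos ht, if_pos ht, if_pos ht]
      have h1 : ∀ y, Amix W (m + 1) x1 t y * Real.logb 2 (Amix W (m + 1) x1 t y / Gmix W y)
          = ((1 / 2 : ℝ) * Pmix W m x1 t y * Real.logb 2 (Pmix W m x1 t y / Gmix W y)
              + (1 / 2 : ℝ) * Qmix W m x1 t y * Real.logb 2 (Qmix W m x1 t y / Gmix W y))
            - ((1 / 2 : ℝ) * Pmix W m x1 t y *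
                Real.logb 2 (Pmix W m x1 t y / ((1 / 2 : ℝ) * (Pmix W m x1 t y + Qmix W m x1 t y)))
              + (1 / 2 : ℝ) * Qmix W m x1 t y *
                Real.logb 2 (Qmix W m x1 t y /
                  ((1 / 2 : ℝ) * (Pmix W m x1 t y + Qmix W m x1 t y)))) := by
        intro y
        rw [Amix_succ W m x1 t y]
        exact jpoint _ _ _ (Pmix_nonneg W hpos m x1 t y) (Qmix_nonneg W hpos m x1 t y)
          (fun h => ⟨Pmix_zero_of_G W hpos m x1 t y h, Qmix_zero_of_G W hpos m x1 t y h⟩)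
      rw [Finset.sum_congr rfl (fun y _ => h1 y), Finset.sum_sub_distrib]
      rfl
    · rw [if_neg ht, if_neg ht, if_neg ht, sub_zero]
  rw [step1]
  congr 1
  rw [Finset.sum_comm]
  have keyt : ∀ t : Fin (m + 1) → Fin r → ZMod 2,
      (∑ x1 : Fin r → ZMod 2, (if LinearIndependent (ZMod 2) t then
          ∑ y, ((1 / 2 : ℝ) * Pmix W m x1 t y * Real.logb 2 (Pmix W m x1 t y / Gmix W y)
            + (1 / 2 : ℝ) * Qmix W m x1 t y * Real.logb 2 (Qmix W m x1 t y / Gmix W y))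
        else 0))
      = ∑ x1 : Fin r → ZMod 2, (if LinearIndependent (ZMod 2) t then
          ∑ y, Pmix W m x1 t y * Real.logb 2 (Pmix W m x1 t y / Gmix W y) else 0) := by
    intro t
    by_cases ht : LinearIndependent (ZMod 2) t
    · simp only [if_pos ht]
      have hsplit : ∀ x1 : Fin r → ZMod 2,
          ∑ y, ((1 / 2 : ℝ) * Pmix W m x1 t y * Real.logb 2 (Pmix W m x1 t y / Gmix W y)
            + (1 / 2 : ℝ) * Qmix W m x1 t y * Real.logb 2 (Qmix W m x1 t y / Gmix W y))
          = (1 / 2 : ℝ) * (∑ y, Pmix W m x1 t y * Real.logb 2 (Pmix W m x1 t y / Gmix W y))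
            + (1 / 2 : ℝ) * (∑ y, Pmix W m (x1 + t (Fin.last m)) t y *
                Real.logb 2 (Pmix W m (x1 + t (Fin.last m)) t y / Gmix W y)) := by
        intro x1
        rw [Finset.sum_add_distrib, Finset.mul_sum, Finset.mul_sum]
        congr 1
        · apply Finset.sum_congr rfl; intro y _; ring
        · apply Finset.sum_congr rfl; intro y _
          rw [Qmix_eq]
          ring
      rw [Finset.sum_congr rfl (fun x1 _ => hsplit x1), Finset.sum_add_distrib,
        ← Finset.mul_sum, ← Finset.mul_sum]
      have hswap : ∑ x1 : Fin r → ZMod 2, (∑ y, Pmix W m (x1 + t (Fin.last m)) t y *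
            Real.logb 2 (Pmix W m (x1 + t (Fin.last m)) t y / Gmix W y))
          = ∑ x1 : Fin r → ZMod 2, (∑ y, Pmix W m x1 t y *
            Real.logb 2 (Pmix W m x1 t y / Gmix W y)) :=
        Fintype.sum_bijective _ (Equiv.addRight (t (Fin.last m))).bijective _ _ (fun x1 => rfl)
      rw [hswap]
      ring
    · simp [ht]
  rw [Finset.sum_congr rfl (fun t _ => keyt t), Finset.sum_comm]
  have keyx : ∀ x1 : Fin r → ZMod 2,
      (∑ t : Fin (m + 1) → Fin r → ZMod 2, (if LinearIndependent (ZMod 2) t then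
          ∑ y, Pmix W m x1 t y * Real.logb 2 (Pmix W m x1 t y / Gmix W y) else 0))
      = ((2 : ℝ) ^ r - 2 ^ m) * ∑ s : Fin m → Fin r → ZMod 2,
          (if LinearIndependent (ZMod 2) s then
            ∑ y, Amix W m x1 s y * Real.logb 2 (Amix W m x1 s y / Gmix W y) else 0) := by
    intro x1
    exact count_snoc m (fun s => ∑ y, Amix W m x1 s y *
      Real.logb 2 (Amix W m x1 s y / Gmix W y))
  rw [Finset.sum_congr rfl (fun x1 _ => keyx x1), ← Finset.mul_sum]
  rfl

end Channel

end CapAux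

open scoped Classical in
/-- decomposition of the symmetric capacity into symmetric capacities of
binary-input channels, summed over linearly independent tuples (the sum over `m ∈ range r`
with tuple length `m + 1` corresponds to the sum over `m = 1, …, r` of the statement). -/
theorem capacity_binary_decomposition (r : ℕ) (hr : 1 ≤ r) {Y : Type*} [Fintype Y] [Nonempty Y]
    (W : (Fin r → ZMod 2) → Y → ℝ)
    (hpos : ∀ x y, 0 ≤ W x y) (hrow : ∀ x, ∑ y, W x y = 1) :
    capty W = ∑ m ∈ Finset.range r,
      ((1 / (2 ^ r : ℝ)) * ∏ j ∈ Finset.range (m + 1), (1 / ((2 ^ r : ℝ) - 2 ^ j))) *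
        ∑ x1 : Fin r → ZMod 2, ∑ t : Fin (m + 1) → Fin r → ZMod 2,
          (if LinearIndependent (ZMod 2) t then Jcap (Pmix W m x1 t) (Qmix W m x1 t) else 0) := by
  have hcne : ∀ j, j < r → ((2 : ℝ) ^ r - 2 ^ j) ≠ 0 := by
    intro j hj
    have h2 : (2 : ℝ) ^ j < 2 ^ r := by
      apply pow_lt_pow_right₀ (by norm_num) hj
    exact sub_ne_zero.mpr (ne_of_gt h2)
  have hprodne : ∀ n, n ≤ r → (∏ j ∈ Finset.range n, ((2 : ℝ) ^ r - 2 ^ j)) ≠ 0 := by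
    intro n hn
    apply Finset.prod_ne_zero_iff.mpr
    intro j hj
    exact hcne j (lt_of_lt_of_le (Finset.mem_range.mp hj) hn)
  set S : ℕ → ℝ := fun m => ∑ x1 : Fin r → ZMod 2, ∑ t : Fin (m + 1) → Fin r → ZMod 2,
      (if LinearIndependent (ZMod 2) t then Jcap (Pmix W m x1 t) (Qmix W m x1 t) else 0)
    with hS
  set Φ : ℕ → ℝ := fun n => CapAux.Tm W n / ∏ j ∈ Finset.range n, ((2 : ℝ) ^ r - 2 ^ j) with hΦ
  have htel := Finset.sum_range_sub' Φ r
  have hΦ0 : Φ 0 = CapAux.Tm W 0 := by simp [hΦ]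
  have hΦr : Φ r = 0 := by
    rw [hΦ]
    simp only
    rw [CapAux.T_top W hr hpos, zero_div]
  have hstepk : ∀ k, k < r →
      Φ k - Φ (k + 1) = S k / ∏ j ∈ Finset.range (k + 1), ((2 : ℝ) ^ r - 2 ^ j) := by
    intro k hk
    have h1 : CapAux.Tm W (k + 1) = ((2 : ℝ) ^ r - 2 ^ k) * CapAux.Tm W k - S k :=
      CapAux.T_rec W hpos k
    have hp : (∏ j ∈ Finset.range k, ((2 : ℝ) ^ r - 2 ^ j)) ≠ 0 := hprodne k (le_of_lt hk)
    have hck : ((2 : ℝ) ^ r - 2 ^ k) ≠ 0 := hcne k hk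
    rw [hΦ]
    simp only
    rw [Finset.prod_range_succ, h1]
    field_simp
    ring
  have hT0 : CapAux.Tm W 0
      = ∑ k ∈ Finset.range r, S k / ∏ j ∈ Finset.range (k + 1), ((2 : ℝ) ^ r - 2 ^ j) := by
    rw [← Finset.sum_congr rfl (fun k hk => hstepk k (Finset.mem_range.mp hk)), htel, hΦ0, hΦr,
      sub_zero]
  rw [CapAux.capty_eq W, hT0, Finset.mul_sum]
  apply Finset.sum_congr rfl
  intro m hm
  have hpm : (∏ j ∈ Finset.range (m + 1), ((2 : ℝ) ^ r - 2 ^ j)) ≠ 0 :=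
    hprodne (m + 1) (Nat.succ_le_of_lt (Finset.mem_range.mp hm))
  have hprodinv : (∏ j ∈ Finset.range (m + 1), (1 / ((2 : ℝ) ^ r - 2 ^ j)))
      = (∏ j ∈ Finset.range (m + 1), ((2 : ℝ) ^ r - 2 ^ j))⁻¹ := by
    rw [← Finset.prod_inv_distrib]
    apply Finset.prod_congr rfl
    intro j _
    rw [one_div]
  rw [hprodinv]
  rw [div_eq_mul_inv]
  ring
end

section
/- Let ε₀, ε₁, …, ε_r ≥ 0 with Σ_{i=0}^{r} ε_i = 1, and let W be the ordered erasure channel with these parameters. Then its symmetric capacity equals I(W) = r − Σ_{i=1}^{r} i·ε_i. -/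
open Finset

/-- The output obtained from the input `x` by erasing its first `i` (lowest-index)
coordinates. -/
def eraseOut (r : ℕ) (x : Fin r → ZMod 2) (i : ℕ) : Fin r → Option (ZMod 2) :=
  fun j => if (j : ℕ) < i then none else some (x j)

/-- The ordered erasure channel with parameters `ε 0, …, ε r`: the input `x` is mapped to the
output erasing its first `i` coordinates with probability `ε i`, and to no other output. -/
noncomputable def erasureChannel (r : ℕ) (ε : ℕ → ℝ) :
    (Fin r → ZMod 2) → (Fin r → Option (ZMod 2)) → ℝ :=
  fun x y => ∑ i ∈ Finset.range (r + 1), if y = eraseOut r x i then ε i else 0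

lemma eraseOut_inj (r : ℕ) (x x' : Fin r → ZMod 2) {i i' : ℕ} (hi : i ≤ r) (hi' : i' ≤ r)
    (h : eraseOut r x i = eraseOut r x' i') : i = i' := by
  by_contra hne
  rcases Nat.lt_or_ge i i' with hlt | hge
  · have := congrFun h ⟨i, lt_of_lt_of_le hlt hi'⟩
    simp [eraseOut, hlt] at this
  · have hlt : i' < i := lt_of_le_of_ne hge (Ne.symm hne)
    have := congrFun h ⟨i', lt_of_lt_of_le hlt hi⟩
    simp [eraseOut, hlt] at this

lemma eraseOut_agree (r : ℕ) (x x' : Fin r → ZMod 2) {i : ℕ}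
    (h : eraseOut r x i = eraseOut r x' i) (j : Fin r) (hj : ¬ (j:ℕ) < i) : x j = x' j := by
  have := congrFun h j
  simpa [eraseOut, hj] using this

lemma eraseOut_of_agree (r : ℕ) (x x' : Fin r → ZMod 2) {i : ℕ}
    (h : ∀ j : Fin r, ¬ (j:ℕ) < i → x j = x' j) : eraseOut r x i = eraseOut r x' i := by
  funext j
  by_cases hj : (j:ℕ) < i <;> simp [eraseOut, hj]
  · exact h j hj

lemma erasureChannel_apply (r : ℕ) (ε : ℕ → ℝ) (x x' : Fin r → ZMod 2) {i : ℕ} (hi : i ≤ r) :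
    erasureChannel r ε x' (eraseOut r x i) =
      if eraseOut r x i = eraseOut r x' i then ε i else 0 := by
  unfold erasureChannel
  refine Finset.sum_eq_single_of_mem i (by simp [Nat.lt_succ_iff, hi]) ?_
  intro j hj hne
  rw [Finset.mem_range, Nat.lt_succ_iff] at hj
  rw [if_neg]
  intro h
  exact hne (eraseOut_inj r x x' hi hj h).symm

lemma erasureChannel_self (r : ℕ) (ε : ℕ → ℝ) (x : Fin r → ZMod 2) {i : ℕ} (hi : i ≤ r) :
    erasureChannel r ε x (eraseOut r x i) = ε i := by
  rw [erasureChannel_apply r ε x x hi, if_pos rfl]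

lemma erasureChannel_zero (r : ℕ) (ε : ℕ → ℝ) (x : Fin r → ZMod 2)
    (y : Fin r → Option (ZMod 2)) (hy : ∀ i ≤ r, y ≠ eraseOut r x i) :
    erasureChannel r ε x y = 0 := by
  unfold erasureChannel
  refine Finset.sum_eq_zero fun i hi => ?_
  rw [Finset.mem_range, Nat.lt_succ_iff] at hi
  rw [if_neg (hy i hi)]

lemma card_agree (r : ℕ) (x : Fin r → ZMod 2) {i : ℕ} (hi : i ≤ r) :
    (Finset.univ.filter fun x' : Fin r → ZMod 2 =>
      eraseOut r x i = eraseOut r x' i).card = 2 ^ i := by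
  classical
  have himg : (Finset.univ.filter fun x' : Fin r → ZMod 2 =>
      eraseOut r x i = eraseOut r x' i) =
      Finset.univ.image (fun u : Fin i → ZMod 2 => fun j : Fin r =>
        if h : (j : ℕ) < i then u ⟨j, h⟩ else x j) := by
    ext x'
    simp only [Finset.mem_filter, Finset.mem_univ, true_and, Finset.mem_image]
    constructor
    · intro h
      refine ⟨fun k => x' ⟨k, lt_of_lt_of_le k.2 hi⟩, ?_⟩
      funext j
      by_cases hj : (j : ℕ) < i
      · simp [hj]
      · simp only [hj, dif_neg, not_false_iff]
        exact eraseOut_agree r x x' h j hj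
    · rintro ⟨u, rfl⟩
      refine eraseOut_of_agree r x _ fun j hj => ?_
      simp [hj]
  rw [himg, Finset.card_image_of_injective _ ?_, Finset.card_univ, Fintype.card_fun]
  · simp
  · intro u u' h
    funext k
    have := congrFun h ⟨k, lt_of_lt_of_le k.2 hi⟩
    simpa using this

lemma sum_erasureChannel (r : ℕ) (ε : ℕ → ℝ) (x : Fin r → ZMod 2) {i : ℕ} (hi : i ≤ r) :
    ∑ x' : Fin r → ZMod 2, erasureChannel r ε x' (eraseOut r x i) = 2 ^ i * ε i := by
  classical
  have : ∀ x' : Fin r → ZMod 2, erasureChannel r ε x' (eraseOut r x i) =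
      if eraseOut r x i = eraseOut r x' i then ε i else 0 :=
    fun x' => erasureChannel_apply r ε x x' hi
  simp only [this]
  rw [← Finset.sum_filter, Finset.sum_const, card_agree r x hi, nsmul_eq_mul]
  push_cast
  ring

lemma term_val (r i : ℕ) (ε : ℕ → ℝ) (hεi : 0 ≤ ε i) :
    ε i * Real.logb 2 (ε i / (1 / (2:ℝ)^r * (2^i * ε i))) = ε i * ((r:ℝ) - i) := by
  rcases eq_or_lt_of_le hεi with h0 | hp
  · simp [← h0]
  · congr 1
    have h1 : ε i / (1 / (2:ℝ)^r * (2^i * ε i)) = 2^r / 2^i := by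
      field_simp
    rw [h1, Real.logb_div (by positivity) (by positivity), Real.logb_pow, Real.logb_pow,
      Real.logb_self_eq_one (by norm_num)]
    ring

lemma ec_inner_sum (r : ℕ) (ε : ℕ → ℝ) (hε : ∀ i ≤ r, 0 ≤ ε i)
    (hsum : ∑ i ∈ Finset.range (r + 1), ε i = 1) (x : Fin r → ZMod 2) :
    ∑ y : Fin r → Option (ZMod 2), (1 / (2:ℝ)^r) * erasureChannel r ε x y *
      Real.logb 2 (erasureChannel r ε x y /
        ∑ x', (1 / (2:ℝ)^r) * erasureChannel r ε x' y) =
      (1 / (2:ℝ)^r) * ((r : ℝ) - ∑ i ∈ Finset.Icc 1 r, (i : ℝ) * ε i) := by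
  classical
  rw [← Finset.sum_subset
    (Finset.subset_univ ((Finset.range (r+1)).image (eraseOut r x)))
    (fun y _ hy => by
      have : erasureChannel r ε x y = 0 := by
        refine erasureChannel_zero r ε x y fun i hi h => ?_
        exact hy (Finset.mem_image.2 ⟨i, Finset.mem_range.2 (Nat.lt_succ_of_le hi), h.symm⟩)
      rw [this, mul_zero, zero_mul])]
  rw [Finset.sum_image (fun i hi j hj h =>
    eraseOut_inj r x x (Nat.lt_succ_iff.1 (Finset.mem_range.1 hi))
      (Nat.lt_succ_iff.1 (Finset.mem_range.1 hj)) h)]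
  have hterm : ∀ i ∈ Finset.range (r+1),
      (1 / (2:ℝ)^r) * erasureChannel r ε x (eraseOut r x i) *
        Real.logb 2 (erasureChannel r ε x (eraseOut r x i) /
          ∑ x', (1 / (2:ℝ)^r) * erasureChannel r ε x' (eraseOut r x i)) =
      (1 / (2:ℝ)^r) * (ε i * ((r:ℝ) - i)) := by
    intro i hi
    have hi' : i ≤ r := Nat.lt_succ_iff.1 (Finset.mem_range.1 hi)
    rw [erasureChannel_self r ε x hi', ← Finset.mul_sum, sum_erasureChannel r ε x hi',
      mul_assoc, term_val r i ε (hε i hi')]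
  rw [Finset.sum_congr rfl hterm, ← Finset.mul_sum]
  congr 1
  have hins : Finset.range (r+1) = insert 0 (Finset.Icc 1 r) := by
    ext a
    simp [Nat.lt_succ_iff]
    omega
  simp only [mul_sub]
  rw [Finset.sum_sub_distrib, ← Finset.sum_mul, hsum, one_mul]
  congr 1
  rw [hins, Finset.sum_insert (by simp)]
  simp [mul_comm]

/-- the symmetric capacity of the ordered erasure channel equals
`r - ∑_{i=1}^r i εᵢ`. -/
theorem erasure_channel_capacity (r : ℕ) (hr : 1 ≤ r) (ε : ℕ → ℝ)
    (hε : ∀ i ≤ r, 0 ≤ ε i) (hsum : ∑ i ∈ Finset.range (r + 1), ε i = 1) :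
    capty (erasureChannel r ε) = (r : ℝ) - ∑ i ∈ Finset.Icc 1 r, (i : ℝ) * ε i := by
  have hcard : (Fintype.card (Fin r → ZMod 2) : ℝ) = 2 ^ r := by
    rw [Fintype.card_fun]
    push_cast
    simp
  unfold capty
  rw [hcard]
  rw [Finset.sum_congr rfl fun x _ => ec_inner_sum r ε hε hsum x, Finset.sum_const,
    Finset.card_univ, nsmul_eq_mul, hcard]
  field_simp
end
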